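/- Let R be a commutative ℚ-algebra with unit (or an integral domain embeddable in a char-0 field) and let f : R → R be additive, not identically zero, with f(x³) + x·f(x²) − 2x²·f(x) = 0 for all x ∈ R. Then f(x) = f(1)·x for all x ∈ R, and f(1) ≠ 0. -/

import Mathlib

theorem stmt_15 {R : Type*} [CommRing R] [Algebra ℚ R] (f : R → R)
    (hadd : ∀ x y : R, f (x + y) = f x + f y)
    (hne : f ≠ 0)
    (heq : ∀ x : R, f (x ^ 3) + x * f (x ^ 2) - 2 * x ^ 2 * f x = 0) :
    (∀ x : R, f x = f 1 * x) ∧ f 1 ≠ 0 := by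
  have h0 : f 0 = 0 := by
    have h := hadd 0 0
    simp only [add_zero] at h
    exact left_eq_add.mp h
  have hneg : ∀ y : R, f (-y) = - f y := by
    intro y
    have h := hadd y (-y)
    rw [add_neg_cancel, h0] at h
    exact (eq_neg_of_add_eq_zero_right h.symm)
  have key : ∀ x : R, f x = f 1 * x := by
    intro x
    have h1 := heq (x + 1)
    have h2 := heq (x - 1)
    have h0x := heq x
    have A1 : (x + 1) ^ 3 = x ^ 3 + (x ^ 2 + (x ^ 2 + x ^ 2)) + ((x + (x + x)) + 1) := by ring
    have A2 : (x + 1) ^ 2 = x ^ 2 + ((x + x) + 1) := by ring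
    rw [A1, A2] at h1
    simp only [hadd] at h1
    have B1 : (x - 1) ^ 3 = x ^ 3 + (-(x ^ 2) + (-(x ^ 2) + -(x ^ 2))) + ((x + (x + x)) + (-1)) := by ring
    have B2 : (x - 1) ^ 2 = x ^ 2 + ((-x + -x) + 1) := by ring
    have B3 : x - (1 : R) = x + (-1) := by ring
    rw [B1, B2, B3] at h2
    simp only [hadd, hneg] at h2
    have h6 : (6 : R) * (f x - f 1 * x) = 0 := by linear_combination h1 + h2 - 2 * h0x
    have h6' : (6 : ℚ) • (f x - f 1 * x) = 0 := by
      rw [Algebra.smul_def]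
      rw [show ((algebraMap ℚ R) (6:ℚ)) = (6:R) from map_ofNat _ 6]; exact h6
    have hz : f x - f 1 * x = 0 := by
      have := congrArg (fun z => (6⁻¹ : ℚ) • z) h6'
      simpa [smul_smul] using this
    linear_combination hz
  refine ⟨key, ?_⟩
  intro h1
  apply hne
  funext x
  simp [key x, h1]
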